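/- Let x ∈ ℝ^n satisfy ⊞_{i∈[n]} x_i = 0. Then for every natural number p, Σ_{i∈[n]} x_i^{2p+1} = 0. -/

import Mathlib

open scoped Classical

/-- ξ_I[x](α): signed count of occurrences of α among the x i, i ∈ I. -/
noncomputable def xiF {ι : Type*} (I : Finset ι) (x : ι → ℝ) (α : ℝ) : ℤ :=
  ((I.filter fun i => x i = α).card : ℤ) - ((I.filter fun i => x i = -α).card : ℤ)

/-- the n-ary limit operation F_I, i.e. ⊞_{i∈I} x_i. -/
noncomputable def FF {ι : Type*} (I : Finset ι) (x : ι → ℝ) : ℝ :=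
  if h : (I.filter fun j => xiF I x (x j) ≠ 0).Nonempty then
    if 0 < xiF I x ((I.filter fun j => xiF I x (x j) ≠ 0).sup' h fun i => |x i|) then
      (I.filter fun j => xiF I x (x j) ≠ 0).sup' h x
    else if xiF I x ((I.filter fun j => xiF I x (x j) ≠ 0).sup' h fun i => |x i|) < 0 then
      (I.filter fun j => xiF I x (x j) ≠ 0).inf' h x
    else 0
  else 0

lemma xiF_neg {ι : Type*} (I : Finset ι) (x : ι → ℝ) (α : ℝ) :
    xiF I x (-α) = - xiF I x α := by
  simp only [xiF, neg_neg]
  ring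

lemma xiF_zero' {ι : Type*} (I : Finset ι) (x : ι → ℝ) :
    xiF I x 0 = 0 := by simp [xiF]

lemma xiF_all_zero {n : ℕ} (x : Fin n → ℝ) (h : FF Finset.univ x = 0) (α : ℝ) :
    xiF Finset.univ x α = 0 := by
  by_contra hα
  have hex : ∃ i : Fin n, x i = α ∨ x i = -α := by
    by_contra hc
    push_neg at hc
    apply hα
    unfold xiF
    rw [Finset.filter_false_of_mem (fun i _ => (hc i).1),
        Finset.filter_false_of_mem (fun i _ => (hc i).2)]
    simp
  obtain ⟨i0, hi0⟩ := hex
  have hi0J : i0 ∈ Finset.univ.filter fun j => xiF Finset.univ x (x j) ≠ 0 := by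
    rw [Finset.mem_filter]
    refine ⟨Finset.mem_univ _, ?_⟩
    rcases hi0 with h1 | h1 <;> rw [h1]
    · exact hα
    · rw [xiF_neg]; simpa using hα
  have hJ : (Finset.univ.filter fun j => xiF Finset.univ x (x j) ≠ 0).Nonempty := ⟨i0, hi0J⟩
  unfold FF at h
  rw [dif_pos hJ] at h
  set M := (Finset.univ.filter fun j => xiF Finset.univ x (x j) ≠ 0).sup' hJ fun i => |x i|
    with hMdef
  obtain ⟨j, hjJ, hjM⟩ := Finset.exists_mem_eq_sup' hJ (fun i => |x i|)
  have hjxi : xiF Finset.univ x (x j) ≠ 0 := (Finset.mem_filter.mp hjJ).2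
  have hxj0 : x j ≠ 0 := by
    intro h0
    apply hjxi
    rw [h0, xiF_zero']
  have hM0 : 0 < M := by rw [hMdef, hjM]; exact abs_pos.mpr hxj0
  have hMcase : x j = M ∨ x j = -M := (abs_eq hM0.le).mp hjM.symm
  have hMxi : xiF Finset.univ x M ≠ 0 := by
    rcases hMcase with h1 | h1
    · rw [← h1]; exact hjxi
    · intro h0
      apply hjxi
      rw [h1, xiF_neg, h0, neg_zero]
  rcases lt_trichotomy (xiF Finset.univ x M) 0 with hlt | heq | hgt
  · rw [if_neg (by omega), if_pos hlt] at h
    -- ξ(M) < 0 : there is i with x i = -M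
    have hcard : 0 < (Finset.univ.filter fun i => x i = -M).card := by
      unfold xiF at hlt
      omega
    obtain ⟨i, hi⟩ := Finset.card_pos.mp hcard
    have hxi : x i = -M := (Finset.mem_filter.mp hi).2
    have hiJ : i ∈ Finset.univ.filter fun j => xiF Finset.univ x (x j) ≠ 0 := by
      rw [Finset.mem_filter]
      refine ⟨Finset.mem_univ _, ?_⟩
      rw [hxi, xiF_neg]
      omega
    have := Finset.inf'_le x hiJ
    rw [h, hxi] at this
    linarith
  · exact hMxi heq
  · rw [if_pos hgt] at h
    have hcard : 0 < (Finset.univ.filter fun i => x i = M).card := by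
      unfold xiF at hgt
      omega
    obtain ⟨i, hi⟩ := Finset.card_pos.mp hcard
    have hxi : x i = M := (Finset.mem_filter.mp hi).2
    have hiJ : i ∈ Finset.univ.filter fun j => xiF Finset.univ x (x j) ≠ 0 := by
      rw [Finset.mem_filter]
      refine ⟨Finset.mem_univ _, ?_⟩
      rw [hxi]
      omega
    have := Finset.le_sup' x hiJ
    rw [h, hxi] at this
    linarith

theorem stmt_12 {n : ℕ} (x : Fin n → ℝ) (h : FF Finset.univ x = 0) (p : ℕ) :
    ∑ i, (x i) ^ (2 * p + 1) = 0 := by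
  have hxi := xiF_all_zero x h
  have hc : ∀ α : ℝ, (Finset.univ.filter fun i => x i = α).card
      = (Finset.univ.filter fun i => x i = -α).card := by
    intro α
    have := hxi α
    unfold xiF at this
    omega
  rw [← Finset.sum_fiberwise_of_maps_to (g := x) (t := Finset.univ.image x)
      (fun i _ => Finset.mem_image_of_mem x (Finset.mem_univ i))]
  have hfib : ∀ α : ℝ, (∑ i ∈ Finset.univ.filter (fun i => x i = α), x i ^ (2 * p + 1))
      = ((Finset.univ.filter (fun i => x i = α)).card : ℝ) * α ^ (2 * p + 1) := by
    intro α
    rw [Finset.sum_congr rfl (fun i hi => by rw [(Finset.mem_filter.mp hi).2]),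
        Finset.sum_const, nsmul_eq_mul]
  refine Finset.sum_involution (fun α _ => -α) ?_ ?_ ?_ ?_
  · intro α hα
    rw [hfib, hfib, hc α, Odd.neg_pow ⟨p, by omega⟩]
    ring
  · intro α hα hf0 heq
    apply hf0
    have h0 : α = 0 := by
      linarith
    rw [hfib, h0, zero_pow (by omega), mul_zero]
  · intro α hα
    obtain ⟨i, _, hi⟩ := Finset.mem_image.mp hα
    have : 0 < (Finset.univ.filter fun j => x j = -α).card := by
      rw [← hc]
      exact Finset.card_pos.mpr ⟨i, Finset.mem_filter.mpr ⟨Finset.mem_univ _, hi⟩⟩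
    obtain ⟨j, hj⟩ := Finset.card_pos.mp this
    exact Finset.mem_image.mpr ⟨j, Finset.mem_univ _, (Finset.mem_filter.mp hj).2⟩
  · intro α hα
    simp
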